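/- Let n ≥ 4 and let i ∈ {1, ..., n-2}. The number of paths in 𝒫_{i,0} assigned a binomial (two monomials) is ∑_{j=0}^{i} ∑_{l=0}^{i-j-1} C(n-1, j) · C(n-1, l), and the number of paths assigned a single monomial is C(2n-2, i); consequently |𝒫_{i,0}| = C(2n-2, i) + ∑_{j=0}^{i} ∑_{l=0}^{i-j-1} C(n-1, j) C(n-1, l). -/

import Mathlib

/-- Extend a finite integer sequence to `ℕ` by junk value `0` out of range. -/
def seqOf {n : ℕ} (y : Fin n → ℤ) : ℕ → ℤ := fun m => if h : m < n then y ⟨m, h⟩ else 0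

/-- `y` is a lattice path: consecutive entries differ by `±1`. -/
def IsPM {n : ℕ} (y : Fin n → ℤ) : Prop :=
  ∀ j : ℕ, j + 1 < n → (seqOf y (j + 1) = seqOf y j + 1 ∨ seqOf y (j + 1) = seqOf y j - 1)

/-- A path in `𝒫_{i,0}`, as a pair of half-paths joined at the fold `x = n-1`. -/
def PathPair (n i : ℕ) (pq : (Fin n → ℤ) × (Fin n → ℤ)) : Prop :=
  IsPM pq.1 ∧ IsPM pq.2 ∧ seqOf pq.1 0 = (i : ℤ) ∧
    seqOf pq.2 (n - 1) = 2 * (n : ℤ) - 2 - (i : ℤ) ∧ seqOf pq.2 0 ≤ seqOf pq.1 (n - 1)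

namespace S14

variable {N : ℕ}

def stepv (S : Finset (Fin N)) (j : ℕ) : ℤ :=
  if hj : j < N then (if (⟨j, hj⟩ : Fin N) ∈ S then -1 else 1) else 0

def pathOf (c : ℤ) (S : Finset (Fin N)) : Fin (N + 1) → ℤ :=
  fun k => c + ∑ j ∈ Finset.range k.1, stepv S j

lemma seqOf_pathOf (c : ℤ) (S : Finset (Fin N)) {m : ℕ} (hm : m < N + 1) :
    seqOf (pathOf c S) m = c + ∑ j ∈ Finset.range m, stepv S j := by
  simp [seqOf, pathOf, hm]

lemma isPM_pathOf (c : ℤ) (S : Finset (Fin N)) : IsPM (pathOf c S) := by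
  intro j hj
  rw [seqOf_pathOf c S hj, seqOf_pathOf c S (by omega : j < N + 1), Finset.sum_range_succ]
  have hjN : j < N := by omega
  by_cases h : (⟨j, hjN⟩ : Fin N) ∈ S
  · have hs : stepv S j = -1 := by simp [stepv, hjN, h]
    right; rw [hs]; ring
  · have hs : stepv S j = 1 := by simp [stepv, hjN, h]
    left; rw [hs]; ring

lemma sum_stepv (S : Finset (Fin N)) :
    ∑ j ∈ Finset.range N, stepv S j = (N : ℤ) - 2 * S.card := by
  rw [← Fin.sum_univ_eq_sum_range (fun j => stepv S j) N]
  have h1 : ∀ j : Fin N, stepv S j.1 = 1 - 2 * (if j ∈ S then (1 : ℤ) else 0) := by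
    intro j
    by_cases h : j ∈ S <;> simp [stepv, j.isLt, h]
  rw [Finset.sum_congr rfl (fun j _ => h1 j)]
  rw [Finset.sum_sub_distrib, ← Finset.mul_sum, Finset.sum_ite_mem, Finset.univ_inter]
  simp [mul_comm]

def downSet (p : Fin (N + 1) → ℤ) : Finset (Fin N) :=
  Finset.univ.filter fun j => seqOf p (j.1 + 1) = seqOf p j.1 - 1

lemma eq_sum {p : Fin (N + 1) → ℤ} (hp : IsPM p) :
    ∀ m : ℕ, m < N + 1 → seqOf p m = seqOf p 0 + ∑ j ∈ Finset.range m, stepv (downSet p) j := by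
  intro m
  induction m with
  | zero => intro _; simp
  | succ m ih =>
    intro hm
    have hmN : m < N := by omega
    rw [Finset.sum_range_succ, ← add_assoc, ← ih (by omega)]
    have hstep := hp m (by omega)
    by_cases h : (⟨m, hmN⟩ : Fin N) ∈ downSet p
    · have hd : seqOf p (m + 1) = seqOf p m - 1 := by
        simpa [downSet] using h
      have hs : stepv (downSet p) m = -1 := by simp [stepv, hmN, h]
      rw [hd, hs]; ring
    · have hd : ¬ seqOf p (m + 1) = seqOf p m - 1 := by
        simpa [downSet] using h
      have hs : stepv (downSet p) m = 1 := by simp [stepv, hmN, h]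
      rcases hstep with h1 | h1
      · rw [h1, hs]
      · exact absurd h1 hd

lemma path_eq {p : Fin (N + 1) → ℤ} (hp : IsPM p) :
    p = pathOf (seqOf p 0) (downSet p) := by
  funext k
  have h := eq_sum hp k.1 k.2
  have hk : seqOf p k.1 = p k := by simp [seqOf, k.isLt]
  rw [← hk, h]; rfl

lemma downSet_pathOf (c : ℤ) (S : Finset (Fin N)) : downSet (pathOf c S) = S := by
  ext j
  simp only [downSet, Finset.mem_filter, Finset.mem_univ, true_and]
  rw [seqOf_pathOf c S (by omega : j.1 + 1 < N + 1),
      seqOf_pathOf c S (by omega : j.1 < N + 1), Finset.sum_range_succ]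
  have hs : stepv S j.1 = if j ∈ S then -1 else 1 := by simp [stepv, j.isLt]
  rw [hs]
  by_cases h : j ∈ S <;> simp [h] <;> omega

end S14

namespace S14

/-- Master equivalence: path pairs with an extra condition `P h₁ h₂` correspond to
pairs of down-step sets with the translated condition. -/
def pathEquiv (N i : ℕ) (P : ℤ → ℤ → Prop) :
    {pq : (Fin (N + 1) → ℤ) × (Fin (N + 1) → ℤ) //
        PathPair (N + 1) i pq ∧ P (seqOf pq.1 N) (seqOf pq.2 0)} ≃
      {ST : Finset (Fin N) × Finset (Fin N) //
        (ST.1.card + ST.2.card ≤ i) ∧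
          P ((i : ℤ) + N - 2 * ST.1.card) ((N : ℤ) - i + 2 * ST.2.card)} where
  toFun := fun pq =>
    ⟨(downSet pq.1.1, downSet pq.1.2), by
      obtain ⟨⟨hp, hq, h0, hN, hle⟩, hP⟩ := pq.2
      have hn1 : (N + 1 : ℕ) - 1 = N := rfl
      rw [hn1] at hN hle
      have h1 : seqOf pq.1.1 N = (i : ℤ) + N - 2 * (downSet pq.1.1).card := by
        have := eq_sum hp N (by omega)
        rw [sum_stepv, h0] at this; rw [this]; ring
      have h2 : seqOf pq.1.2 0 = (N : ℤ) - i + 2 * (downSet pq.1.2).card := by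
        have := eq_sum hq N (by omega)
        rw [sum_stepv, hN] at this
        push_cast at this ⊢
        linarith
      refine ⟨?_, ?_⟩
      · dsimp only
        rw [h1, h2] at hle; push_cast at hle; omega
      · dsimp only
        rwa [h1, h2] at hP⟩
  invFun := fun ST =>
    ⟨(pathOf (i : ℤ) ST.1.1, pathOf ((N : ℤ) - i + 2 * ST.1.2.card) ST.1.2), by
      obtain ⟨hsum, hP⟩ := ST.2
      have hn1 : (N + 1 : ℕ) - 1 = N := rfl
      have h1 : seqOf (pathOf (i : ℤ) ST.1.1) N = (i : ℤ) + N - 2 * ST.1.1.card := by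
        rw [seqOf_pathOf _ _ (by omega : N < N + 1), sum_stepv]; ring
      have h2 : seqOf (pathOf ((N : ℤ) - i + 2 * ST.1.2.card) ST.1.2) 0 =
          (N : ℤ) - i + 2 * ST.1.2.card := by
        rw [seqOf_pathOf _ _ (by omega : 0 < N + 1)]; simp
      refine ⟨⟨isPM_pathOf _ _, isPM_pathOf _ _, ?_, ?_, ?_⟩, ?_⟩
      · rw [seqOf_pathOf _ _ (by omega : 0 < N + 1)]; simp
      · rw [hn1]
        dsimp only
        rw [seqOf_pathOf _ _ (by omega : N < N + 1), sum_stepv]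
        push_cast; ring
      · rw [hn1]
        dsimp only
        rw [h1, h2]; push_cast; omega
      · dsimp only
        rw [h1, h2]; exact hP⟩
  left_inv := by
    rintro ⟨⟨p, q⟩, ⟨⟨hp, hq, h0, hN, hle⟩, hP⟩⟩
    have hn1 : (N + 1 : ℕ) - 1 = N := rfl
    rw [hn1] at hN
    have h2 : seqOf q 0 = (N : ℤ) - i + 2 * (downSet q).card := by
      have := eq_sum hq N (by omega)
      rw [sum_stepv, hN] at this
      push_cast at this ⊢
      linarith
    apply Subtype.ext
    dsimp only
    have e1 : pathOf (i : ℤ) (downSet p) = p := by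
      rw [← h0]; exact (path_eq hp).symm
    have e2 : pathOf ((N : ℤ) - i + 2 * (downSet q).card) (downSet q) = q := by
      rw [← h2]; exact (path_eq hq).symm
    rw [e1, e2]
  right_inv := by
    rintro ⟨⟨S, T⟩, ⟨hsum, hP⟩⟩
    apply Subtype.ext
    dsimp only
    rw [downSet_pathOf, downSet_pathOf]

end S14

namespace S14

lemma card_filter_card (N j : ℕ) :
    (Finset.univ.filter fun S : Finset (Fin N) => S.card = j).card = Nat.choose N j := by
  rw [← Finset.powerset_univ, ← Finset.powersetCard_eq_filter, Finset.card_powersetCard,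
    Finset.card_fin]

lemma count_pairs (N i : ℕ) (C : ℕ → ℕ → Prop) [∀ a b, Decidable (C a b)] :
    (Finset.univ.filter fun ST : Finset (Fin N) × Finset (Fin N) =>
        C ST.1.card ST.2.card).card =
      ∑ j ∈ Finset.range (N + 1), ∑ l ∈ Finset.range (N + 1),
        if C j l then Nat.choose N j * Nat.choose N l else 0 := by
  rw [Finset.card_eq_sum_card_fiberwise
      (f := fun ST : Finset (Fin N) × Finset (Fin N) => (ST.1.card, ST.2.card))
      (t := Finset.range (N + 1) ×ˢ Finset.range (N + 1))
      (by
        intro ST _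
        simp only [Finset.mem_coe, Finset.mem_product, Finset.mem_range]
        have h1 : ST.1.card ≤ N := by
          calc ST.1.card ≤ Finset.univ.card := Finset.card_le_univ _
            _ = N := by simp
        have h2 : ST.2.card ≤ N := by
          calc ST.2.card ≤ Finset.univ.card := Finset.card_le_univ _
            _ = N := by simp
        omega)]
  rw [Finset.sum_product]
  refine Finset.sum_congr rfl fun j hj => Finset.sum_congr rfl fun l hl => ?_
  rw [Finset.filter_filter]
  by_cases hC : C j l
  · rw [if_pos hC]
    have he : (Finset.univ.filter fun ST : Finset (Fin N) × Finset (Fin N) =>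
        C ST.1.card ST.2.card ∧ (ST.1.card, ST.2.card) = (j, l)) =
        Finset.univ.filter fun ST : Finset (Fin N) × Finset (Fin N) =>
          ST.1.card = j ∧ ST.2.card = l := by
      apply Finset.filter_congr
      intro ST _
      simp only [Prod.mk.injEq]
      constructor
      · rintro ⟨-, h1, h2⟩; exact ⟨h1, h2⟩
      · rintro ⟨h1, h2⟩; exact ⟨by rwa [h1, h2], h1, h2⟩
    rw [he, ← Finset.univ_product_univ,
      Finset.filter_product (fun S : Finset (Fin N) => S.card = j)
        (fun S : Finset (Fin N) => S.card = l),
      Finset.card_product, card_filter_card, card_filter_card]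
  · rw [if_neg hC, Finset.card_eq_zero, Finset.filter_eq_empty_iff]
    rintro ST -
    rintro ⟨h1, h2⟩
    rw [Prod.mk.injEq] at h2
    exact hC (by rwa [h2.1, h2.2] at h1)

end S14

namespace S14

lemma sum_eq_part (N i : ℕ) (hi : i ≤ N) :
    (∑ j ∈ Finset.range (N + 1), ∑ l ∈ Finset.range (N + 1),
        if j + l = i then Nat.choose N j * Nat.choose N l else 0) =
      Nat.choose (N + N) i := by
  have inner : ∀ j, (∑ l ∈ Finset.range (N + 1),
      if j + l = i then Nat.choose N j * Nat.choose N l else 0) =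
      if j ≤ i then Nat.choose N j * Nat.choose N (i - j) else 0 := by
    intro j
    by_cases hj : j ≤ i
    · rw [if_pos hj]
      calc (∑ l ∈ Finset.range (N + 1),
            if j + l = i then Nat.choose N j * Nat.choose N l else 0)
          = ∑ l ∈ Finset.range (N + 1),
            if l = i - j then Nat.choose N j * Nat.choose N l else 0 := by
            exact Finset.sum_congr rfl fun l _ => if_congr (by omega) rfl rfl
        _ = if i - j ∈ Finset.range (N + 1) then Nat.choose N j * Nat.choose N (i - j)
            else 0 := Finset.sum_ite_eq' _ _ _
        _ = Nat.choose N j * Nat.choose N (i - j) := by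
            rw [if_pos (Finset.mem_range.2 (by omega))]
    · rw [if_neg hj]
      exact Finset.sum_eq_zero fun l _ => if_neg (by omega)
  rw [Finset.sum_congr rfl fun j _ => inner j, ← Finset.sum_filter]
  have hf : (Finset.range (N + 1)).filter (· ≤ i) = Finset.range (i + 1) := by
    ext x; simp only [Finset.mem_filter, Finset.mem_range]; omega
  rw [hf, Nat.add_choose_eq, Finset.Nat.sum_antidiagonal_eq_sum_range_succ_mk]

lemma sum_lt_part (N i : ℕ) (hi : i ≤ N) :
    (∑ j ∈ Finset.range (N + 1), ∑ l ∈ Finset.range (N + 1),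
        if j + l < i then Nat.choose N j * Nat.choose N l else 0) =
      ∑ j ∈ Finset.range (i + 1), ∑ l ∈ Finset.range (i - j),
        Nat.choose N j * Nat.choose N l := by
  have inner : ∀ j, (∑ l ∈ Finset.range (N + 1),
      if j + l < i then Nat.choose N j * Nat.choose N l else 0) =
      ∑ l ∈ Finset.range (i - j), Nat.choose N j * Nat.choose N l := by
    intro j
    rw [← Finset.sum_filter]
    congr 1
    ext x; simp only [Finset.mem_filter, Finset.mem_range]; omega
  rw [Finset.sum_congr rfl fun j _ => inner j]
  refine (Finset.sum_subset (Finset.range_subset_range.2 (by omega)) ?_).symm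
  intro j hj hj2
  simp only [Finset.mem_range] at hj hj2
  have : i - j = 0 := by omega
  rw [this]
  simp

end S14

namespace S14

lemma card_lt (N i : ℕ) (hi : 1 ≤ i) (hiN : i ≤ N - 1) (hN : 3 ≤ N) :
    Nat.card {pq : (Fin (N + 1) → ℤ) × (Fin (N + 1) → ℤ) //
        PathPair (N + 1) i pq ∧ seqOf pq.2 0 < seqOf pq.1 N} =
      ∑ j ∈ Finset.range (i + 1), ∑ l ∈ Finset.range (i - j),
        Nat.choose N j * Nat.choose N l := by
  refine (Nat.card_congr (pathEquiv N i fun h1 h2 => h2 < h1)).trans ?_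
  have e2 : {ST : Finset (Fin N) × Finset (Fin N) //
      (ST.1.card + ST.2.card ≤ i) ∧
        ((N : ℤ) - i + 2 * ST.2.card < (i : ℤ) + N - 2 * ST.1.card)} ≃
      {ST : Finset (Fin N) × Finset (Fin N) // ST.1.card + ST.2.card < i} := by
    refine Equiv.subtypeEquivRight fun ST => ?_
    constructor
    · rintro ⟨-, h⟩; omega
    · intro h; exact ⟨by omega, by omega⟩
  refine (Nat.card_congr e2).trans ?_
  rw [Nat.card_eq_fintype_card, Fintype.card_subtype,
    count_pairs N i (fun a b => a + b < i), sum_lt_part N i (by omega)]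

lemma card_eq' (N i : ℕ) (hi : 1 ≤ i) (hiN : i ≤ N - 1) (hN : 3 ≤ N) :
    Nat.card {pq : (Fin (N + 1) → ℤ) × (Fin (N + 1) → ℤ) //
        PathPair (N + 1) i pq ∧ seqOf pq.1 N = seqOf pq.2 0} =
      Nat.choose (N + N) i := by
  refine (Nat.card_congr (pathEquiv N i fun h1 h2 => h1 = h2)).trans ?_
  have e2 : {ST : Finset (Fin N) × Finset (Fin N) //
      (ST.1.card + ST.2.card ≤ i) ∧
        ((i : ℤ) + N - 2 * ST.1.card = (N : ℤ) - i + 2 * ST.2.card)} ≃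
      {ST : Finset (Fin N) × Finset (Fin N) // ST.1.card + ST.2.card = i} := by
    refine Equiv.subtypeEquivRight fun ST => ?_
    constructor
    · rintro ⟨-, h⟩; omega
    · intro h; exact ⟨by omega, by omega⟩
  refine (Nat.card_congr e2).trans ?_
  rw [Nat.card_eq_fintype_card, Fintype.card_subtype,
    count_pairs N i (fun a b => a + b = i), sum_eq_part N i (by omega)]

lemma card_all (N i : ℕ) (hi : 1 ≤ i) (hiN : i ≤ N - 1) (hN : 3 ≤ N) :
    Nat.card {pq : (Fin (N + 1) → ℤ) × (Fin (N + 1) → ℤ) // PathPair (N + 1) i pq} =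
      Nat.choose (N + N) i +
        ∑ j ∈ Finset.range (i + 1), ∑ l ∈ Finset.range (i - j),
          Nat.choose N j * Nat.choose N l := by
  have e0 : {pq : (Fin (N + 1) → ℤ) × (Fin (N + 1) → ℤ) // PathPair (N + 1) i pq} ≃
      {pq : (Fin (N + 1) → ℤ) × (Fin (N + 1) → ℤ) //
        PathPair (N + 1) i pq ∧ (fun (_ _ : ℤ) => True) (seqOf pq.1 N) (seqOf pq.2 0)} :=
    Equiv.subtypeEquivRight fun pq => (and_iff_left trivial).symm
  refine ((Nat.card_congr e0).trans
    (Nat.card_congr (pathEquiv N i fun _ _ => True))).trans ?_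
  have e2 : {ST : Finset (Fin N) × Finset (Fin N) //
      (ST.1.card + ST.2.card ≤ i) ∧ True} ≃
      {ST : Finset (Fin N) × Finset (Fin N) // ST.1.card + ST.2.card ≤ i} :=
    Equiv.subtypeEquivRight fun ST => and_iff_left trivial
  refine (Nat.card_congr e2).trans ?_
  rw [Nat.card_eq_fintype_card, Fintype.card_subtype,
    count_pairs N i (fun a b => a + b ≤ i)]
  have split : ∀ j l : ℕ,
      (if j + l ≤ i then Nat.choose N j * Nat.choose N l else 0) =
        (if j + l = i then Nat.choose N j * Nat.choose N l else 0) +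
          (if j + l < i then Nat.choose N j * Nat.choose N l else 0) := by
    intro j l
    split_ifs <;> omega
  calc (∑ j ∈ Finset.range (N + 1), ∑ l ∈ Finset.range (N + 1),
        if j + l ≤ i then Nat.choose N j * Nat.choose N l else 0)
      = (∑ j ∈ Finset.range (N + 1), ∑ l ∈ Finset.range (N + 1),
          if j + l = i then Nat.choose N j * Nat.choose N l else 0) +
        (∑ j ∈ Finset.range (N + 1), ∑ l ∈ Finset.range (N + 1),
          if j + l < i then Nat.choose N j * Nat.choose N l else 0) := by
        rw [← Finset.sum_add_distrib]
        refine Finset.sum_congr rfl fun j _ => ?_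
        rw [← Finset.sum_add_distrib]
        exact Finset.sum_congr rfl fun l _ => split j l
    _ = _ := by rw [sum_eq_part N i (by omega), sum_lt_part N i (by omega)]

end S14

/-- The refined count behind Theorem 4.2(1): the number of paths in `𝒫_{i,0}` assigned a
binomial (fold heights strictly separated, `h₁ > h₂`) is
`∑_{j=0}^{i} ∑_{l=0}^{i-j-1} C(n-1,j)C(n-1,l)`; the number of paths assigned a single
monomial (`h₁ = h₂`) is `C(2n-2,i)`; consequently `|𝒫_{i,0}|` is the sum of the two. -/
theorem statement14 (n i : ℕ) (hn : 4 ≤ n) (hi1 : 1 ≤ i) (hi2 : i ≤ n - 2) :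
    (Nat.card {pq : (Fin n → ℤ) × (Fin n → ℤ) //
          PathPair n i pq ∧ seqOf pq.2 0 < seqOf pq.1 (n - 1)} =
        ∑ j ∈ Finset.range (i + 1), ∑ l ∈ Finset.range (i - j),
          Nat.choose (n - 1) j * Nat.choose (n - 1) l) ∧
    (Nat.card {pq : (Fin n → ℤ) × (Fin n → ℤ) //
          PathPair n i pq ∧ seqOf pq.1 (n - 1) = seqOf pq.2 0} =
        Nat.choose (2 * n - 2) i) ∧
    (Nat.card {pq : (Fin n → ℤ) × (Fin n → ℤ) // PathPair n i pq} =
        Nat.choose (2 * n - 2) i +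
          ∑ j ∈ Finset.range (i + 1), ∑ l ∈ Finset.range (i - j),
            Nat.choose (n - 1) j * Nat.choose (n - 1) l) := by
  obtain ⟨N, rfl⟩ : ∃ N, n = N + 1 := ⟨n - 1, by omega⟩
  have hN : 3 ≤ N := by omega
  have hiN : i ≤ N - 1 := by omega
  have h2 : 2 * (N + 1) - 2 = N + N := by omega
  have h1 : (N + 1) - 1 = N := rfl
  rw [h1, h2]
  exact ⟨S14.card_lt N i hi1 hiN hN, S14.card_eq' N i hi1 hiN hN,
    S14.card_all N i hi1 hiN hN⟩
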